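/- Fix c > 0 and n ≥ 1. For x = (x₁,0,…,0) with x₁ > 1, define for y = (y₁,y') ∈ R × R^{n-1} the kernel K₂(t,x,y) = (t/x₁)·(t² + |x₁-y₁|/x₁ + |y'|²)^{-(n+2)/2}·exp(-c(t²+|y'|²)x₁/(x₁-y₁)) restricted to x₁/2 ≤ y₁ < x₁. Then ∫_{R^n} K₂(t,x,y) dy ≤ C for all t > 0, with C depending only on n and c. -/

import Mathlib

open Real MeasureTheory
lemma aux_base_int (m : ℕ) :
    Integrable (fun z : EuclideanSpace ℝ (Fin m) => (1 + ‖z‖ ^ 2) ^ (-((m : ℝ) + 3) / 2)) := by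
  have h := integrable_rpow_neg_one_add_norm_sq
    (E := EuclideanSpace ℝ (Fin m)) (μ := volume) (r := (m : ℝ) + 3)
    (by rw [finrank_euclideanSpace_fin]; linarith)
  simpa [neg_div] using h

lemma aux_int (m : ℕ) {a : ℝ} (ha : 0 < a) :
    Integrable (fun z : EuclideanSpace ℝ (Fin m) => (a + ‖z‖ ^ 2) ^ (-((m : ℝ) + 3) / 2)) := by
  set p : ℝ := -((m : ℝ) + 3) / 2 with hp
  have hple : p ≤ 0 := by rw [hp, neg_div]; exact neg_nonpos.mpr (by positivity)
  have hb : 0 < min a 1 := lt_min ha one_pos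
  refine ((aux_base_int m).const_mul (min a 1 ^ p)).mono'
    (Measurable.aestronglyMeasurable (by fun_prop)) (ae_of_all _ fun z => ?_)
  have h1 : min a 1 * (1 + ‖z‖ ^ 2) ≤ a + ‖z‖ ^ 2 := by
    have h2 : min a 1 ≤ a := min_le_left _ _
    have h3 : min a 1 ≤ 1 := min_le_right _ _
    nlinarith [sq_nonneg ‖z‖]
  rw [Real.norm_eq_abs, abs_of_nonneg (Real.rpow_nonneg (by positivity) _)]
  calc (a + ‖z‖ ^ 2) ^ p ≤ (min a 1 * (1 + ‖z‖ ^ 2)) ^ p :=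
        Real.rpow_le_rpow_of_nonpos (by positivity) h1 hple
    _ = min a 1 ^ p * (1 + ‖z‖ ^ 2) ^ p := Real.mul_rpow hb.le (by positivity)

lemma aux_scale (m : ℕ) {a : ℝ} (ha : 0 < a) :
    ∫ z : EuclideanSpace ℝ (Fin m), (a + ‖z‖ ^ 2) ^ (-((m : ℝ) + 3) / 2)
      = a ^ (-(3:ℝ) / 2) * ∫ z : EuclideanSpace ℝ (Fin m), (1 + ‖z‖ ^ 2) ^ (-((m : ℝ) + 3) / 2) := by
  set p : ℝ := -((m : ℝ) + 3) / 2 with hp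
  have hR : (0:ℝ) ≤ Real.sqrt a := Real.sqrt_nonneg a
  have key := Measure.integral_comp_smul_of_nonneg (μ := (volume : Measure (EuclideanSpace ℝ (Fin m))))
      (fun z => (a + ‖z‖ ^ 2) ^ p) (Real.sqrt a) (hR := hR)
  have hfr : Module.finrank ℝ (EuclideanSpace ℝ (Fin m)) = m := finrank_euclideanSpace_fin
  have hnorm : ∀ z : EuclideanSpace ℝ (Fin m),
      (a + ‖Real.sqrt a • z‖ ^ 2) ^ p = a ^ p * (1 + ‖z‖ ^ 2) ^ p := by
    intro z
    rw [norm_smul, mul_pow, Real.norm_eq_abs, sq_abs, Real.sq_sqrt ha.le]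
    have h4 : a + a * ‖z‖ ^ 2 = a * (1 + ‖z‖ ^ 2) := by ring
    rw [h4]
    exact Real.mul_rpow ha.le (by positivity)
  simp only [hnorm] at key
  rw [integral_const_mul, hfr, smul_eq_mul] at key
  have hsq : Real.sqrt a ^ m = a ^ ((m : ℝ) / 2) := by
    rw [Real.sqrt_eq_rpow, ← Real.rpow_natCast (a ^ ((1:ℝ)/2)) m, ← Real.rpow_mul ha.le]
    ring_nf
  rw [hsq] at key
  have h2 : a ^ ((m : ℝ) / 2) * (a ^ p * ∫ z : EuclideanSpace ℝ (Fin m), (1 + ‖z‖ ^ 2) ^ p)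
      = ∫ z : EuclideanSpace ℝ (Fin m), (a + ‖z‖ ^ 2) ^ p := by
    rw [key, ← mul_assoc, mul_inv_cancel₀ (by positivity), one_mul]
  rw [← h2, ← mul_assoc, ← Real.rpow_add ha]
  congr 2
  rw [hp]; ring

lemma aux_oneD {x₁ t : ℝ} (hx : 0 < x₁) (ht : 0 < t) :
    ∫ y₁ in Set.Ico (x₁ / 2) x₁, (t / x₁) * (t ^ 2 + (x₁ - y₁) / x₁) ^ (-(3:ℝ) / 2) ≤ 2 := by
  have hle : x₁ / 2 ≤ x₁ := by linarith
  set f : ℝ → ℝ := fun y => (t / x₁) * (t ^ 2 + (x₁ - y) / x₁) ^ (-(3:ℝ) / 2) with hf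
  set F : ℝ → ℝ := fun y => 2 * t * (t ^ 2 + (x₁ - y) / x₁) ^ (-(1:ℝ) / 2) with hF
  have hpos : ∀ y ∈ Set.uIcc (x₁ / 2) x₁, 0 < t ^ 2 + (x₁ - y) / x₁ := by
    intro y hy
    rw [Set.uIcc_of_le hle] at hy
    have : 0 ≤ (x₁ - y) / x₁ := div_nonneg (by linarith [hy.2]) hx.le
    nlinarith
  have hderiv : ∀ y ∈ Set.uIcc (x₁ / 2) x₁, HasDerivAt F (f y) y := by
    intro y hy
    have hin : HasDerivAt (fun y : ℝ => t ^ 2 + (x₁ - y) / x₁) (-1 / x₁) y := by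
      have h1 : HasDerivAt (fun y : ℝ => x₁ - y) (-1) y := (hasDerivAt_id y).const_sub x₁
      exact (h1.div_const x₁).const_add (t ^ 2)
    have h2 := (hin.rpow_const (p := -(1:ℝ)/2) (Or.inl (hpos y hy).ne')).const_mul (2 * t)
    refine h2.congr_deriv ?_
    rw [hf]
    have he : (-(1:ℝ)/2 - 1) = -(3:ℝ)/2 := by norm_num
    rw [← he]
    ring
  have hcont : ContinuousOn f (Set.uIcc (x₁ / 2) x₁) := by
    apply ContinuousOn.mul continuousOn_const
    apply ContinuousOn.rpow_const
    · fun_prop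
    · exact fun y hy => Or.inl (hpos y hy).ne'
  have hint : IntervalIntegrable f volume (x₁ / 2) x₁ := hcont.intervalIntegrable
  have hftc := intervalIntegral.integral_eq_sub_of_hasDerivAt hderiv hint
  have hIco : ∫ y₁ in Set.Ico (x₁ / 2) x₁, f y₁ = ∫ y₁ in (x₁ / 2)..x₁, f y₁ := by
    rw [intervalIntegral.integral_of_le hle, integral_Ico_eq_integral_Ioo, integral_Ioc_eq_integral_Ioo]
  rw [hIco, hftc]
  have hFx : F x₁ = 2 := by
    rw [hF]
    simp only [sub_self, zero_div, add_zero]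
    rw [← Real.rpow_natCast t 2, ← Real.rpow_mul ht.le]
    norm_num
    rw [Real.rpow_neg_one]
    field_simp
  rw [hFx]
  have : 0 ≤ F (x₁ / 2) := by
    rw [hF]
    have := hpos (x₁ / 2) (by rw [Set.uIcc_of_le hle]; exact Set.left_mem_Icc.2 hle)
    positivity
  linarith

theorem stmt_5 (m : ℕ) (c : ℝ) (hc : 0 < c) :
    ∃ C > 0, ∀ x₁ : ℝ, 1 < x₁ → ∀ t : ℝ, 0 < t →
      ∫ y : ℝ × EuclideanSpace ℝ (Fin m),
          (if x₁ / 2 ≤ y.1 ∧ y.1 < x₁ then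
            (t / x₁) * (t ^ 2 + |x₁ - y.1| / x₁ + ‖y.2‖ ^ 2) ^ (-((m : ℝ) + 3) / 2)
              * Real.exp (-c * (t ^ 2 + ‖y.2‖ ^ 2) * x₁ / (x₁ - y.1))
          else 0)
        ≤ C := by
  classical
  set I : ℝ := ∫ z : EuclideanSpace ℝ (Fin m), (1 + ‖z‖ ^ 2) ^ (-((m : ℝ) + 3) / 2) with hIdef
  have hI0 : 0 ≤ I := integral_nonneg fun z => Real.rpow_nonneg (by positivity) _
  refine ⟨2 * I + 1, by linarith, fun x₁ hx₁ t ht => ?_⟩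
  have hx : 0 < x₁ := by linarith
  have ha0 : ∀ y₁ : ℝ, 0 < t ^ 2 + |x₁ - y₁| / x₁ := by
    intro y₁
    have : 0 ≤ |x₁ - y₁| / x₁ := div_nonneg (abs_nonneg _) hx.le
    nlinarith
  set G : ℝ × EuclideanSpace ℝ (Fin m) → ℝ := fun y =>
    if x₁ / 2 ≤ y.1 ∧ y.1 < x₁ then
      (t / x₁) * (t ^ 2 + |x₁ - y.1| / x₁ + ‖y.2‖ ^ 2) ^ (-((m : ℝ) + 3) / 2)
    else 0 with hGdef
  have hGnn : ∀ y, 0 ≤ G y := by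
    intro y; rw [hGdef]; dsimp only
    split
    · positivity
    · exact le_refl 0
  have hGmeas : AEStronglyMeasurable G (volume : Measure (ℝ × EuclideanSpace ℝ (Fin m))) := by
    have hs : MeasurableSet {y : ℝ × EuclideanSpace ℝ (Fin m) | x₁ / 2 ≤ y.1 ∧ y.1 < x₁} := by
      have he : {y : ℝ × EuclideanSpace ℝ (Fin m) | x₁ / 2 ≤ y.1 ∧ y.1 < x₁}
          = Prod.fst ⁻¹' Set.Ico (x₁ / 2) x₁ := rfl
      rw [he]; exact measurable_fst measurableSet_Ico
    apply Measurable.aestronglyMeasurable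
    exact Measurable.ite hs (by fun_prop) measurable_const
  -- slice integrals
  have hslice_int : ∀ y₁ : ℝ, Integrable (fun z => G (y₁, z)) := by
    intro y₁
    rw [hGdef]; dsimp only
    by_cases hcond : x₁ / 2 ≤ y₁ ∧ y₁ < x₁
    · simp only [hcond, if_true, and_self, true_and]
      exact (aux_int m (ha0 y₁)).const_mul _
    · simp only [hcond, if_false]
      exact integrable_zero _ _ _
  have hslice_val : ∀ y₁ : ℝ, (∫ z, G (y₁, z))
      = (if x₁ / 2 ≤ y₁ ∧ y₁ < x₁ then
          (t / x₁) * ((t ^ 2 + |x₁ - y₁| / x₁) ^ (-(3:ℝ) / 2) * I) else 0) := by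
    intro y₁
    by_cases hcond : x₁ / 2 ≤ y₁ ∧ y₁ < x₁
    · simp only [hGdef, hcond, if_true, and_self, true_and]
      rw [integral_const_mul]
      congr 1
      exact aux_scale m (ha0 y₁)
    · simp only [hGdef, hcond, if_false, integral_zero]
  -- the 1-d majorant
  set h : ℝ → ℝ := fun y₁ =>
    if x₁ / 2 ≤ y₁ ∧ y₁ < x₁ then
      (t / x₁) * ((t ^ 2 + |x₁ - y₁| / x₁) ^ (-(3:ℝ) / 2) * I) else 0 with hhdef
  have hh_eq : h = Set.indicator (Set.Ico (x₁ / 2) x₁)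
      (fun y₁ => (t / x₁) * ((t ^ 2 + |x₁ - y₁| / x₁) ^ (-(3:ℝ) / 2) * I)) := by
    ext y₁
    rw [hhdef, Set.indicator_apply]
    simp [Set.mem_Ico]
  have hg_cont : Continuous fun y₁ : ℝ =>
      (t / x₁) * ((t ^ 2 + |x₁ - y₁| / x₁) ^ (-(3:ℝ) / 2) * I) := by
    apply continuous_const.mul
    apply Continuous.mul ?_ continuous_const
    apply Continuous.rpow_const (by fun_prop)
    exact fun y₁ => Or.inl (ha0 y₁).ne'
  have hh_int : Integrable h := by
    rw [hh_eq, integrable_indicator_iff measurableSet_Ico]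
    exact (hg_cont.continuousOn.integrableOn_Icc).mono_set Set.Ico_subset_Icc_self
  -- integrability of G
  have hGint : Integrable G := by
    rw [← hIdef] at *
    rw [show (volume : Measure (ℝ × EuclideanSpace ℝ (Fin m))) = volume.prod volume from
      Measure.volume_eq_prod _ _] at hGmeas ⊢
    refine (integrable_prod_iff hGmeas).2 ⟨ae_of_all _ hslice_int, ?_⟩
    have he : (fun y₁ : ℝ => ∫ z, ‖G (y₁, z)‖) = h := by
      funext y₁
      have : (fun z : EuclideanSpace ℝ (Fin m) => ‖G (y₁, z)‖) = fun z => G (y₁, z) :=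
        funext fun z => Real.norm_of_nonneg (hGnn _)
      rw [this, hslice_val y₁, hhdef]
    rw [he]
    exact hh_int
  -- main comparison
  have hFG : ∀ y : ℝ × EuclideanSpace ℝ (Fin m),
      (if x₁ / 2 ≤ y.1 ∧ y.1 < x₁ then
        (t / x₁) * (t ^ 2 + |x₁ - y.1| / x₁ + ‖y.2‖ ^ 2) ^ (-((m : ℝ) + 3) / 2)
          * Real.exp (-c * (t ^ 2 + ‖y.2‖ ^ 2) * x₁ / (x₁ - y.1))
      else 0) ≤ G y := by
    intro y
    rw [hGdef]; dsimp only
    by_cases hcond : x₁ / 2 ≤ y.1 ∧ y.1 < x₁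
    · simp only [hcond, if_true, and_self, true_and]
      have hA : 0 ≤ (t / x₁) * (t ^ 2 + |x₁ - y.1| / x₁ + ‖y.2‖ ^ 2) ^ (-((m : ℝ) + 3) / 2) := by
        positivity
      have hexp : Real.exp (-c * (t ^ 2 + ‖y.2‖ ^ 2) * x₁ / (x₁ - y.1)) ≤ 1 := by
        rw [Real.exp_le_one_iff]
        apply div_nonpos_of_nonpos_of_nonneg
        · have h1 : 0 ≤ c * (t ^ 2 + ‖y.2‖ ^ 2) * x₁ := by positivity
          nlinarith
        · linarith [hcond.2]
      calc (t / x₁) * (t ^ 2 + |x₁ - y.1| / x₁ + ‖y.2‖ ^ 2) ^ (-((m : ℝ) + 3) / 2)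
            * Real.exp (-c * (t ^ 2 + ‖y.2‖ ^ 2) * x₁ / (x₁ - y.1))
          ≤ (t / x₁) * (t ^ 2 + |x₁ - y.1| / x₁ + ‖y.2‖ ^ 2) ^ (-((m : ℝ) + 3) / 2) * 1 :=
            mul_le_mul_of_nonneg_left hexp hA
        _ = _ := mul_one _
    · simp only [hcond, if_false]
      exact le_refl 0
  have hFnn : ∀ y : ℝ × EuclideanSpace ℝ (Fin m),
      0 ≤ (if x₁ / 2 ≤ y.1 ∧ y.1 < x₁ then
        (t / x₁) * (t ^ 2 + |x₁ - y.1| / x₁ + ‖y.2‖ ^ 2) ^ (-((m : ℝ) + 3) / 2)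
          * Real.exp (-c * (t ^ 2 + ‖y.2‖ ^ 2) * x₁ / (x₁ - y.1))
      else 0) := by
    intro y
    split
    · positivity
    · exact le_refl 0
  calc ∫ y : ℝ × EuclideanSpace ℝ (Fin m),
        (if x₁ / 2 ≤ y.1 ∧ y.1 < x₁ then
          (t / x₁) * (t ^ 2 + |x₁ - y.1| / x₁ + ‖y.2‖ ^ 2) ^ (-((m : ℝ) + 3) / 2)
            * Real.exp (-c * (t ^ 2 + ‖y.2‖ ^ 2) * x₁ / (x₁ - y.1))
        else 0)
      ≤ ∫ y, G y := integral_mono_of_nonneg (ae_of_all _ hFnn) hGint (ae_of_all _ hFG)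
    _ = ∫ y₁ : ℝ, ∫ z, G (y₁, z) := by
        rw [show (volume : Measure (ℝ × EuclideanSpace ℝ (Fin m))) = volume.prod volume from
          Measure.volume_eq_prod _ _] at hGint ⊢
        exact integral_prod G hGint
    _ = ∫ y₁ : ℝ, h y₁ := by
        exact integral_congr_ae (ae_of_all _ fun y₁ => hslice_val y₁)
    _ ≤ 2 * I + 1 := by
        have hq : ∀ y₁ : ℝ, h y₁ = I * (Set.indicator (Set.Ico (x₁ / 2) x₁)
            (fun y₁ => (t / x₁) * (t ^ 2 + |x₁ - y₁| / x₁) ^ (-(3:ℝ) / 2)) y₁) := by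
          intro y₁
          rw [hhdef, Set.indicator_apply]
          simp only [Set.mem_Ico]
          split
          · ring
          · simp
        simp_rw [hq]
        rw [integral_const_mul, integral_indicator measurableSet_Ico]
        have hval : ∫ y₁ in Set.Ico (x₁ / 2) x₁,
            (t / x₁) * (t ^ 2 + |x₁ - y₁| / x₁) ^ (-(3:ℝ) / 2) ≤ 2 := by
          have hcg : ∀ y₁ ∈ Set.Ico (x₁ / 2) x₁,
              (t / x₁) * (t ^ 2 + |x₁ - y₁| / x₁) ^ (-(3:ℝ) / 2)
                = (t / x₁) * (t ^ 2 + (x₁ - y₁) / x₁) ^ (-(3:ℝ) / 2) := by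
            intro y₁ hy₁
            rw [abs_of_nonneg (by linarith [hy₁.2] : (0:ℝ) ≤ x₁ - y₁)]
          rw [setIntegral_congr_fun measurableSet_Ico hcg]
          exact aux_oneD hx ht
        have hnn : 0 ≤ ∫ y₁ in Set.Ico (x₁ / 2) x₁,
            (t / x₁) * (t ^ 2 + |x₁ - y₁| / x₁) ^ (-(3:ℝ) / 2) :=
          integral_nonneg fun y₁ => by positivity
        nlinarith
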